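/- Let 𝒞 = (C_1, …, C_k) be an edge clique cover of a finite simple graph G = (V,E). If 𝒞 is a minimum clique cover of G, i.e., no edge clique cover of G has fewer than k cliques, then there exists a locally minimal clique cover 𝒞* = (C*_1, …, C*_k) of G with the same number k of cliques such that C*_l ⊆ C_l for all l ∈ {1, …, k}. -/

import Mathlib

/-- An edge clique cover of a simple graph `G`: a finite indexed family of cliques
such that every edge of `G` has both endpoints in some member of the family. -/
def IsEdgeCliqueCover {V : Type*} (G : SimpleGraph V) {k : ℕ} (C : Fin k → Finset V) : Prop :=
  (∀ l, G.IsClique (C l : Set V)) ∧ ∀ ⦃x y : V⦄, G.Adj x y → ∃ l, x ∈ C l ∧ y ∈ C l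

/-- One step of the locally minimal construction: processing the edge `{x, y}`.
If the edge is already contained in some clique of the current family, nothing changes;
otherwise, if some clique of the family can absorb the edge (the union is still a clique),
exactly one such clique is replaced by its extension; otherwise the new clique `{x, y}`
is appended. -/
inductive LMStep {V : Type*} [DecidableEq V] (G : SimpleGraph V) :
    List (Finset V) → V → V → List (Finset V) → Prop
  | covered (cc : List (Finset V)) (x y : V)
      (h : ∃ D ∈ cc, x ∈ D ∧ y ∈ D) :
      LMStep G cc x y cc
  | extend (pre post : List (Finset V)) (D : Finset V) (x y : V)
      (hnc : ∀ D' ∈ pre ++ D :: post, ¬ (x ∈ D' ∧ y ∈ D'))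
      (hcl : G.IsClique ((D ∪ {x, y} : Finset V) : Set V)) :
      LMStep G (pre ++ D :: post) x y (pre ++ (D ∪ {x, y}) :: post)
  | newClique (cc : List (Finset V)) (x y : V)
      (hnc : ∀ D ∈ cc, ¬ (x ∈ D ∧ y ∈ D))
      (hext : ∀ D ∈ cc, ¬ G.IsClique ((D ∪ {x, y} : Finset V) : Set V)) :
      LMStep G cc x y (cc ++ [({x, y} : Finset V)])

/-- `LMRun G cc es cc'` means: starting from the family `cc` and processing the edges in
the list `es` one by one according to the locally minimal construction, one can obtain
the family `cc'`. -/
inductive LMRun {V : Type*} [DecidableEq V] (G : SimpleGraph V) :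
    List (Finset V) → List (Sym2 V) → List (Finset V) → Prop
  | nil (cc : List (Finset V)) : LMRun G cc [] cc
  | cons (cc cc' cc'' : List (Finset V)) (x y : V) (es : List (Sym2 V))
      (hstep : LMStep G cc x y cc') (hrest : LMRun G cc' es cc'') :
      LMRun G cc (s(x, y) :: es) cc''

/-- A family of cliques `(C_1, …, C_k)` is a locally minimal clique cover of `G` if it can
be produced (as an unordered family) by the locally minimal construction, starting from the
empty family and processing the edges of `G` in some enumeration (a duplicate-free list
containing exactly the edges of `G`). -/
def IsLocallyMinimal {V : Type*} [DecidableEq V] (G : SimpleGraph V) {k : ℕ}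
    (C : Fin k → Finset V) : Prop :=
  ∃ es : List (Sym2 V), es.Nodup ∧ (∀ e, e ∈ es ↔ e ∈ G.edgeSet) ∧
    ∃ L : List (Finset V), LMRun G [] es L ∧ L.Perm (List.ofFn C)

section Aux
set_option linter.unusedSectionVars false
set_option linter.unusedVariables false
open scoped Classical

variable {V : Type*} [Fintype V] [DecidableEq V] {k : ℕ}

private lemma sym2_rep (e : Sym2 V) : ∃ x y : V, e = s(x, y) :=
  Sym2.ind (fun x y => ⟨x, y, rfl⟩) e

/-- an edge is covered by the current family -/
def EdgeCovered (cc : List (Fin k × Finset V)) (e : Sym2 V) : Prop :=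
  ∃ p ∈ cc, ∀ v ∈ e, v ∈ p.2

lemma edgeCovered_mono {cc cc' : List (Fin k × Finset V)}
    (h : ∀ p ∈ cc, ∃ q ∈ cc', p.2 ⊆ q.2) {e : Sym2 V} :
    EdgeCovered cc e → EdgeCovered cc' e := by
  rintro ⟨p, hp, hm⟩
  obtain ⟨q, hq, hsub⟩ := h p hp
  exact ⟨q, hq, fun v hv => hsub (hm v hv)⟩

lemma lmRun_append {G : SimpleGraph V} {cc0 cc1 cc2 : List (Finset V)} {es : List (Sym2 V)}
    {x y : V} (h : LMRun G cc0 es cc1) (h2 : LMStep G cc1 x y cc2) :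
    LMRun G cc0 (es ++ [s(x, y)]) cc2 := by
  induction h with
  | nil cc => exact LMRun.cons _ _ _ _ _ _ h2 (LMRun.nil _)
  | cons cc cc' cc'' a b es hstep hrest ih => exact LMRun.cons _ _ _ _ _ _ hstep (ih h2)

/-- The invariant carried through the construction, at stage `l` (groups `0, …, l-1` done). -/
structure CoverInv (G : SimpleGraph V) (C : Fin k → Finset V) (l : ℕ)
    (es : List (Sym2 V)) (cc : List (Fin k × Finset V)) : Prop where
  nodup : es.Nodup
  mem_edge : ∀ e ∈ es, e ∈ G.edgeSet
  run : LMRun G [] es (cc.map Prod.snd)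
  fst_le : ∀ p ∈ cc, (p.1 : ℕ) < l ∨ (p.1 : ℕ) = l
  fst_nodup : (cc.map Prod.fst).Nodup
  sub : ∀ p ∈ cc, p.2 ⊆ C p.1
  cov : ∀ e ∈ es, EdgeCovered cc e
  done : ∀ e ∈ G.edgeSet, (∃ j : Fin k, (j : ℕ) < l ∧ ∀ v ∈ e, v ∈ C j) → e ∈ es

/-- remaining (unprocessed) edges inside `C l` -/
noncomputable def Rem (G : SimpleGraph V) (C : Fin k → Finset V) (l : Fin k)
    (es : List (Sym2 V)) : Finset (Sym2 V) :=
  G.edgeFinset.filter (fun e => (∀ v ∈ e, v ∈ C l) ∧ e ∉ es)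

lemma mem_Rem {G : SimpleGraph V} {C : Fin k → Finset V} {l : Fin k} {es : List (Sym2 V)}
    {e : Sym2 V} : e ∈ Rem G C l es ↔ e ∈ G.edgeSet ∧ (∀ v ∈ e, v ∈ C l) ∧ e ∉ es := by
  simp [Rem, SimpleGraph.mem_edgeFinset]

lemma Rem_append {G : SimpleGraph V} {C : Fin k → Finset V} {l : Fin k} {es : List (Sym2 V)}
    {e : Sym2 V} (he : e ∈ Rem G C l es) :
    Rem G C l (es ++ [e]) = (Rem G C l es).erase e := by
  ext e'
  simp only [mem_Rem, Finset.mem_erase, List.mem_append, List.mem_singleton]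
  tauto


lemma exchange {G : SimpleGraph V} {C : Fin k → Finset V} (hcov : IsEdgeCliqueCover G C)
    (hmin : ∀ (k' : ℕ) (C' : Fin k' → Finset V), IsEdgeCliqueCover G C' → k ≤ k')
    (l : Fin k) {es : List (Sym2 V)} {cc : List (Fin k × Finset V)}
    (inv : CoverInv G C (l : ℕ) es cc) (hlT : l ∉ cc.map Prod.fst)
    (hunc : ∀ e ∈ Rem G C l es, ¬ EdgeCovered cc e) :
    ∃ x y : V, s(x, y) ∈ Rem G C l es ∧
      ∀ D ∈ cc.map Prod.snd, ¬ G.IsClique ((D ∪ {x, y} : Finset V) : Set V) := by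
  by_contra hcon
  push_neg at hcon
  -- hcon : ∀ x y, s(x,y) ∈ Rem → ∃ D ∈ cc.map snd, IsClique (D ∪ {x,y})
  set R := Rem G C l es with hRdef
  have hRC : ∀ e ∈ R, ∀ v ∈ e, v ∈ C l := fun e he => (mem_Rem.1 he).2.1
  -- endpoints of a Sym2 as a Finset
  set endp : Sym2 V → Finset V := fun e => Finset.univ.filter (· ∈ e) with hendp
  have mem_endp : ∀ (v : V) (e : Sym2 V), v ∈ endp e ↔ v ∈ e := by
    intro v e; simp [hendp]
  have endp_mk : ∀ x y : V, endp s(x, y) = {x, y} := by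
    intro x y; ext v; simp [hendp, Sym2.mem_iff]
  have habs : ∀ e ∈ R, ∃ D ∈ cc.map Prod.snd,
      G.IsClique ((D ∪ endp e : Finset V) : Set V) := by
    intro e he
    obtain ⟨x, y, rfl⟩ := sym2_rep e
    obtain ⟨D, hD, hcl⟩ := hcon x y he
    exact ⟨D, hD, by rwa [endp_mk]⟩
  set pick : Sym2 V → Finset V := fun e =>
    if h : ∃ D ∈ cc.map Prod.snd, G.IsClique ((D ∪ endp e : Finset V) : Set V) then h.choose
    else ∅ with hpickdef
  have hpick : ∀ e ∈ R, pick e ∈ cc.map Prod.snd ∧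
      G.IsClique ((pick e ∪ endp e : Finset V) : Set V) := by
    intro e he
    have h := habs e he
    simp only [hpickdef, dif_pos h]
    exact ⟨h.choose_spec.1, h.choose_spec.2⟩
  set W : Finset V → Finset V := fun D =>
    Finset.univ.filter (fun v => ∃ e ∈ R, v ∈ e ∧ pick e = D) with hWdef
  set S : Finset (Fin k) := Finset.univ \ insert l (cc.map Prod.fst).toFinset with hSdef
  set LL : List (Finset V) :=
    (cc.map Prod.snd).map (fun D => D ∪ W D) ++ S.toList.map C with hLLdef
  have hCl : ∀ j, G.IsClique ((C j : Finset V) : Set V) := hcov.1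
  have hsnd_clique : ∀ D ∈ cc.map Prod.snd, G.IsClique (D : Set V) := by
    intro D hD
    obtain ⟨p, hp, rfl⟩ := List.mem_map.1 hD
    exact (hCl p.1).subset (Finset.coe_subset.2 (inv.sub p hp))
  have hW_sub : ∀ D, ∀ v ∈ W D, v ∈ C l := by
    intro D v hv
    obtain ⟨e, he, hve, _⟩ := (Finset.mem_filter.1 hv).2
    exact hRC e he v hve
  -- each member of LL is a clique
  have hLL_clique : ∀ D ∈ LL, G.IsClique (D : Set V) := by
    intro D hD
    rcases List.mem_append.1 hD with h | h
    · obtain ⟨D0, hD0, rfl⟩ := List.mem_map.1 h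
      have key : ∀ a b : V, a ∈ D0 → b ∈ W D0 → a ≠ b → G.Adj a b := by
        intro a b ha hb hab
        obtain ⟨e, he, hbe, hpe⟩ := (Finset.mem_filter.1 hb).2
        have hcl := (hpick e he).2
        rw [hpe] at hcl
        refine hcl ?_ ?_ hab
        · simp only [Finset.coe_union, Set.mem_union, Finset.mem_coe]; exact Or.inl ha
        · simp only [Finset.coe_union, Set.mem_union, Finset.mem_coe]
          exact Or.inr ((mem_endp b e).2 hbe)
      rw [SimpleGraph.isClique_iff]
      intro u hu v hv huv
      simp only [Finset.coe_union, Set.mem_union, Finset.mem_coe] at hu hv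
      rcases hu with hu | hu <;> rcases hv with hv | hv
      · exact hsnd_clique D0 hD0 hu hv huv
      · exact key u v hu hv huv
      · exact (key v u hv hu (Ne.symm huv)).symm
      · exact hCl l (hW_sub D0 u hu) (hW_sub D0 v hv) huv
    · obtain ⟨j, hj, rfl⟩ := List.mem_map.1 h
      exact hCl j
  -- LL covers all edges
  have hLLcov : ∀ x y : V, G.Adj x y → ∃ D ∈ LL, x ∈ D ∧ y ∈ D := by
    intro x y hxy
    have hE : s(x, y) ∈ G.edgeSet := hxy
    by_cases hc : EdgeCovered cc s(x, y)
    · obtain ⟨p, hp, hm⟩ := hc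
      refine ⟨p.2 ∪ W p.2,
        List.mem_append_left _ (List.mem_map.2 ⟨p.2, List.mem_map.2 ⟨p, hp, rfl⟩, rfl⟩),
        Finset.mem_union_left _ (hm x (by simp)), Finset.mem_union_left _ (hm y (by simp))⟩
    · have hnj : ∀ j : Fin k, (j : ℕ) < (l : ℕ) → ¬ (∀ v ∈ s(x, y), v ∈ C j) := by
        intro j hj hmem
        exact hc (inv.cov _ (inv.done _ hE ⟨j, hj, hmem⟩))
      by_cases hl : ∀ v ∈ s(x, y), v ∈ C l
      · have hR : s(x, y) ∈ R := by
          rw [hRdef, mem_Rem]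
          exact ⟨hE, hl, fun hes => hc (inv.cov _ hes)⟩
        have hp := hpick _ hR
        refine ⟨pick s(x, y) ∪ W (pick s(x, y)),
          List.mem_append_left _ (List.mem_map.2 ⟨_, hp.1, rfl⟩),
          Finset.mem_union_right _ ?_, Finset.mem_union_right _ ?_⟩
        · exact Finset.mem_filter.2 ⟨Finset.mem_univ _, ⟨s(x, y), hR, by simp, rfl⟩⟩
        · exact Finset.mem_filter.2 ⟨Finset.mem_univ _, ⟨s(x, y), hR, by simp, rfl⟩⟩
      · obtain ⟨j0, hx0, hy0⟩ := hcov.2 hxy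
        have hmemj : ∀ v ∈ s(x, y), v ∈ C j0 := by
          intro v hv; rcases Sym2.mem_iff.1 hv with rfl | rfl <;> assumption
        have hj0l : j0 ≠ l := fun h => hl (h ▸ hmemj)
        have hj0T : j0 ∉ (cc.map Prod.fst).toFinset := by
          rw [List.mem_toFinset]
          intro hT
          obtain ⟨p, hp, hpj⟩ := List.mem_map.1 hT
          rcases inv.fst_le p hp with h | h
          · exact hnj j0 (by rw [← hpj]; exact h) hmemj
          · exact hj0l (by rw [← hpj]; exact Fin.ext h)
        refine ⟨C j0, List.mem_append_right _ (List.mem_map.2 ⟨j0, ?_, rfl⟩), hx0, hy0⟩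
        rw [Finset.mem_toList, hSdef, Finset.mem_sdiff]
        exact ⟨Finset.mem_univ _, by simp [hj0l, hj0T]⟩
  -- LL is strictly shorter than k
  have hlen : LL.length < k := by
    have h1 : (cc.map Prod.fst).toFinset.card = cc.length := by
      rw [List.toFinset_card_of_nodup inv.fst_nodup, List.length_map]
    have hl1 : l ∉ (cc.map Prod.fst).toFinset := by rwa [List.mem_toFinset]
    have h2 : (insert l (cc.map Prod.fst).toFinset).card = cc.length + 1 := by
      rw [Finset.card_insert_of_notMem hl1, h1]
    have h3 : (insert l (cc.map Prod.fst).toFinset).card ≤ k := by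
      have := Finset.card_le_univ (insert l (cc.map Prod.fst).toFinset)
      simpa using this
    have hS : S.card = k - (cc.length + 1) := by
      rw [hSdef, Finset.card_sdiff_of_subset (Finset.subset_univ _), h2]
      simp
    have hk : 0 < k := lt_of_le_of_lt (Nat.zero_le _) l.2
    have : LL.length = cc.length + S.card := by
      rw [hLLdef]; simp [Finset.length_toList]
    omega
  -- contradiction with minimality
  have hECC : IsEdgeCliqueCover G (fun i : Fin LL.length => LL.get i) := by
    constructor
    · intro i; exact hLL_clique _ (LL.get_mem i)
    · intro x y hxy
      obtain ⟨D, hD, hx, hy⟩ := hLLcov x y hxy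
      obtain ⟨i, hi⟩ := List.mem_iff_get.1 hD
      refine ⟨i, ?_, ?_⟩
      · show x ∈ LL.get i
        rw [hi]; exact hx
      · show y ∈ LL.get i
        rw [hi]; exact hy
  have := hmin LL.length _ hECC
  omega


/-- Packaging: one processing step preserves the invariant. -/
lemma step_inv {G : SimpleGraph V} {C : Fin k → Finset V} {l : Fin k}
    {es : List (Sym2 V)} {cc cc' : List (Fin k × Finset V)}
    (inv : CoverInv G C (l : ℕ) es cc) {x y : V}
    (he : s(x, y) ∈ Rem G C l es)
    (hrun : LMRun G [] (es ++ [s(x, y)]) (cc'.map Prod.snd))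
    (hfst_le : ∀ p ∈ cc', (p.1 : ℕ) < (l : ℕ) ∨ (p.1 : ℕ) = (l : ℕ))
    (hfst_nodup : (cc'.map Prod.fst).Nodup)
    (hsub : ∀ p ∈ cc', p.2 ⊆ C p.1)
    (hmono : ∀ p ∈ cc, ∃ q ∈ cc', p.2 ⊆ q.2)
    (hcovxy : EdgeCovered cc' s(x, y)) :
    CoverInv G C (l : ℕ) (es ++ [s(x, y)]) cc' := by
  obtain ⟨hE, hxyC, hes⟩ := mem_Rem.1 he
  refine ⟨?_, ?_, hrun, hfst_le, hfst_nodup, hsub, ?_, ?_⟩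
  · rw [List.nodup_append]
    exact ⟨inv.nodup, List.nodup_singleton _, by
      intro a ha b hb hab; simp only [List.mem_singleton] at hb; subst hb; subst hab; exact hes ha⟩
  · intro e' he'
    rcases List.mem_append.1 he' with h | h
    · exact inv.mem_edge _ h
    · simp only [List.mem_singleton] at h; subst h; exact hE
  · intro e' he'
    rcases List.mem_append.1 he' with h | h
    · exact edgeCovered_mono hmono (inv.cov _ h)
    · simp only [List.mem_singleton] at h; subst h; exact hcovxy
  · intro e' h1 h2
    exact List.mem_append_left _ (inv.done e' h1 h2)

/-- Inner loop: process all remaining edges of group `l`. -/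
lemma inner {G : SimpleGraph V} {C : Fin k → Finset V} (hcov : IsEdgeCliqueCover G C)
    (hmin : ∀ (k' : ℕ) (C' : Fin k' → Finset V), IsEdgeCliqueCover G C' → k ≤ k')
    (l : Fin k) :
    ∀ (n : ℕ) (es : List (Sym2 V)) (cc : List (Fin k × Finset V)),
      CoverInv G C (l : ℕ) es cc → (Rem G C l es).card ≤ n →
      ∃ es' cc', CoverInv G C (l : ℕ) es' cc' ∧ Rem G C l es' = ∅ := by
  intro n
  induction n with
  | zero =>
    intro es cc inv h
    exact ⟨es, cc, inv, Finset.card_eq_zero.1 (Nat.le_zero.1 h)⟩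
  | succ n ih =>
    intro es cc inv hcard
    rcases eq_or_ne (Rem G C l es) ∅ with h0 | hne
    · exact ⟨es, cc, inv, h0⟩
    have hcard' : ∀ e ∈ Rem G C l es, (Rem G C l (es ++ [e])).card ≤ n := by
      intro e he
      rw [Rem_append he, Finset.card_erase_of_mem he]
      omega
    rcases Classical.em (∃ e ∈ Rem G C l es, EdgeCovered cc e) with ⟨e, he, hc⟩ | hncc
    · -- covered step
      obtain ⟨x, y, rfl⟩ := sym2_rep e
      refine ih (es ++ [s(x, y)]) cc (step_inv inv he ?_ inv.fst_le inv.fst_nodup inv.sub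
        (fun p hp => ⟨p, hp, subset_rfl⟩) hc) (hcard' _ he)
      refine lmRun_append inv.run (LMStep.covered _ x y ?_)
      obtain ⟨p, hp, hm⟩ := hc
      exact ⟨p.2, List.mem_map.2 ⟨p, hp, rfl⟩, hm x (by simp), hm y (by simp)⟩
    · have hunc : ∀ e ∈ Rem G C l es, ¬ EdgeCovered cc e := by
        intro e he hc; exact hncc ⟨e, he, hc⟩
      have hnc : ∀ x y : V, s(x, y) ∈ Rem G C l es →
          ∀ D ∈ cc.map Prod.snd, ¬ (x ∈ D ∧ y ∈ D) := by
        intro x y he D hD hm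
        obtain ⟨p, hp, rfl⟩ := List.mem_map.1 hD
        exact hunc _ he ⟨p, hp, fun v hv => by
          rcases Sym2.mem_iff.1 hv with rfl | rfl
          exacts [hm.1, hm.2]⟩
      by_cases hlT : l ∈ cc.map Prod.fst
      · -- extend the clique with index l
        obtain ⟨e, he⟩ := Finset.nonempty_iff_ne_empty.2 hne
        obtain ⟨x, y, rfl⟩ := sym2_rep e
        obtain ⟨hE, hxyC, hes⟩ := mem_Rem.1 he
        obtain ⟨p, hp, hpl⟩ := List.mem_map.1 hlT
        obtain ⟨cc1, cc2, hcceq⟩ := List.append_of_mem hp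
        have hpsub : p.2 ⊆ C l := by rw [← hpl]; exact inv.sub p hp
        have hcl : G.IsClique ((p.2 ∪ {x, y} : Finset V) : Set V) := by
          refine (hcov.1 l).subset (Finset.coe_subset.2 ?_)
          refine Finset.union_subset hpsub ?_
          rw [Finset.insert_subset_iff]
          exact ⟨hxyC x (by simp), Finset.singleton_subset_iff.2 (hxyC y (by simp))⟩
        set q : Fin k × Finset V := (p.1, p.2 ∪ {x, y}) with hq
        set cc' : List (Fin k × Finset V) := cc1 ++ q :: cc2 with hcc'
        have hmemcc : ∀ r ∈ cc', r ∈ cc1 ∨ r = q ∨ r ∈ cc2 := by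
          intro r hr
          rcases List.mem_append.1 hr with h | h
          · exact Or.inl h
          · rcases List.mem_cons.1 h with h | h
            · exact Or.inr (Or.inl h)
            · exact Or.inr (Or.inr h)
        have hmemcc12 : ∀ r : Fin k × Finset V, r ∈ cc1 ∨ r ∈ cc2 → r ∈ cc := by
          intro r hr
          rw [hcceq]
          rcases hr with h | h
          · exact List.mem_append_left _ h
          · exact List.mem_append_right _ (List.mem_cons_of_mem _ h)
        have hfst_eq : cc'.map Prod.fst = cc.map Prod.fst := by
          rw [hcc', hcceq]; simp [hq]
        refine ih (es ++ [s(x, y)]) cc' (step_inv inv he ?_ ?_ ?_ ?_ ?_ ?_) (hcard' _ he)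
        · have hsnd : cc.map Prod.snd = cc1.map Prod.snd ++ p.2 :: cc2.map Prod.snd := by
            rw [hcceq]; simp
          have hsnd' : cc'.map Prod.snd =
              cc1.map Prod.snd ++ (p.2 ∪ {x, y}) :: cc2.map Prod.snd := by
            rw [hcc']; simp [hq]
          rw [hsnd']
          refine lmRun_append ?_ (LMStep.extend _ _ _ x y ?_ hcl)
          · rw [← hsnd]; exact inv.run
          · rw [← hsnd]
            intro D hD
            exact hnc x y he D hD
        · intro r hr
          rcases hmemcc r hr with h | h | h
          · exact inv.fst_le r (hmemcc12 r (Or.inl h))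
          · subst h; exact inv.fst_le p hp
          · exact inv.fst_le r (hmemcc12 r (Or.inr h))
        · rw [hfst_eq]; exact inv.fst_nodup
        · intro r hr
          rcases hmemcc r hr with h | h | h
          · exact inv.sub r (hmemcc12 r (Or.inl h))
          · subst h
            simp only [hq]
            rw [hpl]
            refine Finset.union_subset hpsub ?_
            rw [Finset.insert_subset_iff]
            exact ⟨hxyC x (by simp), Finset.singleton_subset_iff.2 (hxyC y (by simp))⟩
          · exact inv.sub r (hmemcc12 r (Or.inr h))
        · intro r hr
          rw [hcceq] at hr
          rcases List.mem_append.1 hr with h | h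
          · exact ⟨r, List.mem_append_left _ h, subset_rfl⟩
          · rcases List.mem_cons.1 h with h | h
            · subst h
              exact ⟨q, List.mem_append_right _ List.mem_cons_self,
                Finset.subset_union_left⟩
            · exact ⟨r, List.mem_append_right _ (List.mem_cons_of_mem _ h), subset_rfl⟩
        · refine ⟨q, List.mem_append_right _ List.mem_cons_self, ?_⟩
          intro v hv
          rcases Sym2.mem_iff.1 hv with rfl | rfl <;> simp [hq]
      · -- start a new clique
        obtain ⟨x, y, he, hext⟩ := exchange hcov hmin l inv hlT hunc
        obtain ⟨hE, hxyC, hes⟩ := mem_Rem.1 he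
        set q : Fin k × Finset V := (l, {x, y}) with hq
        set cc' : List (Fin k × Finset V) := cc ++ [q] with hcc'
        have hmemcc : ∀ r ∈ cc', r ∈ cc ∨ r = q := by
          intro r hr
          rcases List.mem_append.1 hr with h | h
          · exact Or.inl h
          · simp only [List.mem_singleton] at h; exact Or.inr h
        refine ih (es ++ [s(x, y)]) cc' (step_inv inv he ?_ ?_ ?_ ?_ ?_ ?_) (hcard' _ he)
        · have hsnd' : cc'.map Prod.snd = cc.map Prod.snd ++ [({x, y} : Finset V)] := by
            rw [hcc']; simp [hq]
          rw [hsnd']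
          exact lmRun_append inv.run (LMStep.newClique _ x y (hnc x y he) hext)
        · intro r hr
          rcases hmemcc r hr with h | h
          · exact inv.fst_le r h
          · subst h; exact Or.inr rfl
        · rw [hcc']
          simp only [List.map_append, List.map_cons, List.map_nil]
          rw [List.nodup_append]
          refine ⟨inv.fst_nodup, List.nodup_singleton _, ?_⟩
          intro a ha b hb hab
          simp only [List.mem_singleton] at hb
          subst hb; subst hab
          exact hlT ha
        · intro r hr
          rcases hmemcc r hr with h | h
          · exact inv.sub r h
          · subst h
            simp only [hq]
            rw [Finset.insert_subset_iff]
            exact ⟨hxyC x (by simp), Finset.singleton_subset_iff.2 (hxyC y (by simp))⟩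
        · intro r hr
          exact ⟨r, List.mem_append_left _ hr, subset_rfl⟩
        · refine ⟨q, List.mem_append_right _ (List.mem_singleton_self _), ?_⟩
          intro v hv
          rcases Sym2.mem_iff.1 hv with rfl | rfl <;> simp [hq]

lemma CoverInv.succ {G : SimpleGraph V} {C : Fin k → Finset V} {l : Fin k}
    {es : List (Sym2 V)} {cc : List (Fin k × Finset V)}
    (inv : CoverInv G C (l : ℕ) es cc) (hR : Rem G C l es = ∅) :
    CoverInv G C ((l : ℕ) + 1) es cc := by
  refine ⟨inv.nodup, inv.mem_edge, inv.run, ?_, inv.fst_nodup, inv.sub, inv.cov, ?_⟩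
  · intro p hp
    rcases inv.fst_le p hp with h | h <;> exact Or.inl (by omega)
  · intro e he ⟨j, hj, hmem⟩
    rcases Nat.lt_succ_iff_lt_or_eq.1 hj with h | h
    · exact inv.done e he ⟨j, h, hmem⟩
    · have hjl : j = l := Fin.ext h
      subst hjl
      by_contra hes
      have : e ∈ Rem G C j es := mem_Rem.2 ⟨he, hmem, hes⟩
      rw [hR] at this
      simp at this

lemma outer {G : SimpleGraph V} {C : Fin k → Finset V} (hcov : IsEdgeCliqueCover G C)
    (hmin : ∀ (k' : ℕ) (C' : Fin k' → Finset V), IsEdgeCliqueCover G C' → k ≤ k') :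
    ∀ l ≤ k, ∃ es cc, CoverInv G C l es cc := by
  intro l
  induction l with
  | zero =>
    intro _
    refine ⟨[], [], ⟨List.nodup_nil, by simp, ?_, by simp, by simp, by simp, by simp, ?_⟩⟩
    · exact LMRun.nil []
    · intro e he ⟨j, hj, _⟩; omega
  | succ l ih =>
    intro hl
    obtain ⟨es, cc, inv⟩ := ih (Nat.le_of_succ_le hl)
    have hlk : l < k := hl
    obtain ⟨es', cc', inv', hR⟩ :=
      inner hcov hmin ⟨l, hlk⟩ (Rem G C ⟨l, hlk⟩ es).card es cc inv le_rfl
    exact ⟨es', cc', inv'.succ hR⟩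

end Aux

/-- If `(C_1, …, C_k)` is a minimum clique cover of a finite simple graph `G` (no edge
clique cover of `G` has fewer than `k` cliques), then there is a locally minimal clique
cover `(C*_1, …, C*_k)` of `G` with the same number of cliques such that `C*_l ⊆ C_l`
for all `l`. -/
theorem exists_locallyMinimal_subcover_of_minimum {V : Type*} [Fintype V] [DecidableEq V]
    (G : SimpleGraph V) {k : ℕ} (C : Fin k → Finset V) (hcov : IsEdgeCliqueCover G C)
    (hmin : ∀ (k' : ℕ) (C' : Fin k' → Finset V), IsEdgeCliqueCover G C' → k ≤ k') :
    ∃ Cs : Fin k → Finset V, IsEdgeCliqueCover G Cs ∧ IsLocallyMinimal G Cs ∧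
      ∀ l : Fin k, Cs l ⊆ C l := by
  obtain ⟨es, cc, inv⟩ := outer hcov hmin k le_rfl
  have hdone : ∀ e ∈ G.edgeSet, e ∈ es := by
    intro e he
    apply inv.done e he
    obtain ⟨x, y, rfl⟩ := sym2_rep e
    obtain ⟨j, hx, hy⟩ := hcov.2 (G.mem_edgeSet.1 he)
    refine ⟨j, j.2, ?_⟩
    intro v hv; rcases Sym2.mem_iff.1 hv with rfl | rfl <;> assumption
  have hcovall : ∀ e ∈ G.edgeSet, EdgeCovered cc e := fun e he => inv.cov e (hdone e he)
  have hlen_le : cc.length ≤ k := by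
    have := List.Nodup.length_le_card inv.fst_nodup
    simpa using this
  have hECC0 : IsEdgeCliqueCover G (fun i : Fin cc.length => (cc.get i).2) := by
    constructor
    · intro i
      exact (hcov.1 _).subset (Finset.coe_subset.2 (inv.sub _ (cc.get_mem i)))
    · intro x y hxy
      obtain ⟨p, hp, hm⟩ := hcovall s(x, y) hxy
      obtain ⟨i, hi⟩ := List.mem_iff_get.1 hp
      refine ⟨i, ?_, ?_⟩
      · show x ∈ (cc.get i).2
        rw [hi]; exact hm x (by simp)
      · show y ∈ (cc.get i).2
        rw [hi]; exact hm y (by simp)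
  have hlen : cc.length = k := le_antisymm hlen_le (hmin _ _ hECC0)
  have hmemall : ∀ j : Fin k, ∃ p, p ∈ cc ∧ p.1 = j := by
    have huniv : (cc.map Prod.fst).toFinset = Finset.univ :=
      Finset.eq_univ_of_card _ (by
        rw [List.toFinset_card_of_nodup inv.fst_nodup]
        simp [hlen])
    intro j
    have : j ∈ (cc.map Prod.fst).toFinset := huniv ▸ Finset.mem_univ j
    obtain ⟨p, hp, hpj⟩ := List.mem_map.1 (List.mem_toFinset.1 this)
    exact ⟨p, hp, hpj⟩
  choose P hP1 hP2 using hmemall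
  have hPp : ∀ p ∈ cc, P p.1 = p := by
    intro p hp
    exact List.inj_on_of_nodup_map inv.fst_nodup (hP1 p.1) hp (hP2 p.1)
  refine ⟨fun j => (P j).2, ⟨?_, ?_⟩, ?_, ?_⟩
  · intro j
    exact (hcov.1 (P j).1).subset (Finset.coe_subset.2 (inv.sub _ (hP1 j)))
  · intro x y hxy
    obtain ⟨p, hp, hm⟩ := hcovall s(x, y) hxy
    refine ⟨p.1, ?_, ?_⟩
    · show x ∈ (P p.1).2
      rw [hPp p hp]; exact hm x (by simp)
    · show y ∈ (P p.1).2
      rw [hPp p hp]; exact hm y (by simp)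
  · refine ⟨es, inv.nodup, fun e => ⟨inv.mem_edge e, hdone e⟩, cc.map Prod.snd, inv.run, ?_⟩
    have h1 : cc.map Prod.snd = (cc.map Prod.fst).map (fun j => (P j).2) := by
      rw [List.map_map]
      refine List.map_congr_left ?_
      intro p hp
      simp only [Function.comp_apply, hPp p hp]
    rw [h1, List.ofFn_eq_map]
    refine List.Perm.map _ ?_
    rw [List.perm_ext_iff_of_nodup inv.fst_nodup (List.nodup_finRange k)]
    intro j
    simp only [List.mem_finRange, iff_true]
    exact List.mem_map.2 ⟨P j, hP1 j, hP2 j⟩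
  · intro j
    have := inv.sub (P j) (hP1 j)
    rwa [hP2 j] at this
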